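/- arXiv:2412.08289 — 2 statements merged into one kernel-verified Lean document; each statement's English description precedes it below -/
import Mathlib

section
/- Let 𝓔¹ = (E¹_1, …, E¹_k) be a partition of U, let x ∈ E¹_i, let j ≠ i, and let 𝓔² be the partition obtained from 𝓔¹ by moving x from the i-th part to the j-th part: E²_i = E¹_i \ {x}, E²_j = E¹_j ∪ {x}, and E²_p = E¹_p for all p ∉ {i, j}. Then L(𝓔²) − L(𝓔¹) = 2·(b(x, E¹_i) − b(x, E¹_j ∪ {x})). -/
open Finset

variable {U : Type*} [Fintype U] [DecidableEq U]

/-- The belonging degree `b(x, A) = (1/l) Σ_{t=1}^l |c_t(x) ∩ A|`, where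
`c_t(x) = {y ∈ U : y ~_t x}` is the equivalence class of `x` under the `t`-th
base clustering `R t`. -/
noncomputable def bdeg {l : ℕ} (R : Fin l → U → U → Prop)
    [∀ t, DecidableRel (R t)] (x : U) (A : Finset U) : ℝ :=
  (1 / (l : ℝ)) *
    ∑ t : Fin l, (((Finset.univ.filter (fun y => R t y x)) ∩ A).card : ℝ)

/-- The loss of a partition `E : Fin k → Finset U`:
`L(𝓔) = Σ_{p=1}^k Σ_{y ∈ E_p} (n - b(y, E_p))`. -/
noncomputable def lossL {l k : ℕ} (R : Fin l → U → U → Prop)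
    [∀ t, DecidableRel (R t)] (E : Fin k → Finset U) : ℝ :=
  ∑ p : Fin k, ∑ y ∈ E p, ((Fintype.card U : ℝ) - bdeg R y (E p))

private lemma keyt {l : ℕ} (R : Fin l → U → U → Prop) [∀ t, DecidableRel (R t)]
    (hR : ∀ t, Equivalence (R t)) (t : Fin l) (A : Finset U) (x : U) (hx : x ∈ A) :
    (∑ y ∈ A, (A.filter (fun z => R t z y)).card) + 1
      = (∑ y ∈ A.erase x, ((A.erase x).filter (fun z => R t z y)).card)
        + 2 * (A.filter (fun z => R t z x)).card := by
  have he : x ∉ A.erase x := Finset.notMem_erase x A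
  have hA : insert x (A.erase x) = A := Finset.insert_erase hx
  simp only [Finset.card_filter]
  rw [← hA]
  rw [Finset.erase_insert he]
  simp only [Finset.sum_insert he]
  have hxx : (if R t x x then (1:ℕ) else 0) = 1 := if_pos ((hR t).refl x)
  rw [hxx]
  rw [Finset.sum_add_distrib]
  have hsym : ∑ y ∈ A.erase x, (if R t x y then (1:ℕ) else 0)
      = ∑ y ∈ A.erase x, (if R t y x then (1:ℕ) else 0) := by
    refine Finset.sum_congr rfl fun y _ => ?_
    by_cases h : R t x y
    · simp [h, (hR t).symm h]
    · rw [if_neg h, if_neg (fun h' => h ((hR t).symm h'))]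
  rw [hsym]
  ring

private lemma sum_bdeg_sub {l : ℕ} (hl : 1 ≤ l) (R : Fin l → U → U → Prop)
    [∀ t, DecidableRel (R t)] (hR : ∀ t, Equivalence (R t))
    (A : Finset U) (x : U) (hx : x ∈ A) :
    (∑ y ∈ A, bdeg R y A) - (∑ y ∈ A.erase x, bdeg R y (A.erase x))
      = 2 * bdeg R x A - 1 := by
  have hfil : ∀ (t : Fin l) (y : U) (S : Finset U),
      (Finset.univ.filter (fun z => R t z y)) ∩ S = S.filter (fun z => R t z y) := by
    intro t y S; ext z; simp [Finset.mem_filter, and_comm]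
  have expand : ∀ (B : Finset U), ∑ y ∈ B, bdeg R y B
      = (1 / (l:ℝ)) * ∑ t : Fin l, ∑ y ∈ B, ((B.filter (fun z => R t z y)).card : ℝ) := by
    intro B
    simp only [bdeg, hfil]
    rw [← Finset.mul_sum, Finset.sum_comm]
  have hb : bdeg R x A = (1 / (l:ℝ)) * ∑ t : Fin l, ((A.filter (fun z => R t z x)).card : ℝ) := by
    simp only [bdeg, hfil]
  rw [expand, expand, hb]
  have key : ∀ t : Fin l,
      (∑ y ∈ A, ((A.filter (fun z => R t z y)).card : ℝ)) + 1
        = (∑ y ∈ A.erase x, (((A.erase x).filter (fun z => R t z y)).card : ℝ))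
          + 2 * ((A.filter (fun z => R t z x)).card : ℝ) := by
    intro t
    exact_mod_cast keyt R hR t A x hx
  have hsum : (∑ t : Fin l, ∑ y ∈ A, ((A.filter (fun z => R t z y)).card : ℝ)) + l
      = (∑ t : Fin l, ∑ y ∈ A.erase x, (((A.erase x).filter (fun z => R t z y)).card : ℝ))
        + 2 * ∑ t : Fin l, ((A.filter (fun z => R t z x)).card : ℝ) := by
    rw [Finset.mul_sum, ← Finset.sum_add_distrib]
    have : (l : ℝ) = ∑ _t : Fin l, (1:ℝ) := by simp
    rw [this, ← Finset.sum_add_distrib]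
    exact Finset.sum_congr rfl fun t _ => key t
  have hl' : (l:ℝ) ≠ 0 := by positivity
  set SX := ∑ t : Fin l, ∑ y ∈ A, ((A.filter (fun z => R t z y)).card : ℝ) with hSX
  set SY := ∑ t : Fin l, ∑ y ∈ A.erase x, (((A.erase x).filter (fun z => R t z y)).card : ℝ) with hSY
  set SZ := ∑ t : Fin l, ((A.filter (fun z => R t z x)).card : ℝ) with hSZ
  have h2 : SX - SY = 2 * SZ - (l:ℝ) := by linarith [hsum]
  calc (1/(l:ℝ)) * SX - (1/(l:ℝ)) * SY = (1/(l:ℝ)) * (SX - SY) := by ring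
    _ = (1/(l:ℝ)) * (2 * SZ - (l:ℝ)) := by rw [h2]
    _ = 2 * ((1/(l:ℝ)) * SZ) - (1/(l:ℝ)) * (l:ℝ) := by ring
    _ = 2 * ((1/(l:ℝ)) * SZ) - 1 := by rw [one_div, inv_mul_cancel₀ hl']

/-- Moving `x` from the `i`-th part to the `j`-th part changes the loss by
`L(𝓔²) - L(𝓔¹) = 2·(b(x, E¹_i) - b(x, E¹_j ∪ {x}))`. -/
theorem loss_diff_of_move {l k : ℕ} (hl : 1 ≤ l)
    (R : Fin l → U → U → Prop) [∀ t, DecidableRel (R t)]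
    (hR : ∀ t, Equivalence (R t))
    (E1 : Fin k → Finset U)
    (hdisj : ∀ p q, p ≠ q → Disjoint (E1 p) (E1 q))
    (hcover : (Finset.univ : Finset (Fin k)).biUnion E1 = Finset.univ)
    (x : U) (i j : Fin k) (hx : x ∈ E1 i) (hij : j ≠ i)
    (E2 : Fin k → Finset U)
    (hE2i : E2 i = (E1 i).erase x)
    (hE2j : E2 j = insert x (E1 j))
    (hE2 : ∀ p, p ≠ i → p ≠ j → E2 p = E1 p) :
    lossL R E2 - lossL R E1
      = 2 * (bdeg R x (E1 i) - bdeg R x (insert x (E1 j))) := by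
  classical
  set n : ℝ := (Fintype.card U : ℝ)
  have hxB : x ∉ E1 j := Finset.disjoint_left.mp (hdisj i j (fun e => hij e.symm)) hx
  set g : Fin k → ℝ := fun p =>
    (∑ y ∈ E2 p, (n - bdeg R y (E2 p))) - (∑ y ∈ E1 p, (n - bdeg R y (E1 p))) with hg
  have hdiff : lossL R E2 - lossL R E1 = ∑ p : Fin k, g p := by
    simp only [lossL, hg, Finset.sum_sub_distrib]; rfl
  rw [hdiff]
  have hzero : ∀ p ∈ (Finset.univ : Finset (Fin k)), p ∉ ({i, j} : Finset (Fin k)) → g p = 0 := by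
    intro p _ hp
    simp only [Finset.mem_insert, Finset.mem_singleton, not_or] at hp
    simp [hg, hE2 p hp.1 hp.2]
  rw [← Finset.sum_subset (Finset.subset_univ ({i, j} : Finset (Fin k))) hzero]
  rw [Finset.sum_pair (Ne.symm hij)]
  -- part terms
  have hT : ∀ (B : Finset U), (∑ y ∈ B, (n - bdeg R y B)) = B.card * n - ∑ y ∈ B, bdeg R y B := by
    intro B
    rw [Finset.sum_sub_distrib, Finset.sum_const, nsmul_eq_mul]
  have hcardA : ((E1 i).erase x).card = (E1 i).card - 1 := Finset.card_erase_of_mem hx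
  have hA1 : 1 ≤ (E1 i).card := Finset.card_pos.mpr ⟨x, hx⟩
  have hcardAr : (((E1 i).erase x).card : ℝ) = ((E1 i).card : ℝ) - 1 := by
    rw [hcardA]; push_cast [Nat.cast_sub hA1]; ring
  have hcardBr : ((insert x (E1 j)).card : ℝ) = ((E1 j).card : ℝ) + 1 := by
    rw [Finset.card_insert_of_notMem hxB]; push_cast; ring
  have hSi := sum_bdeg_sub hl R hR (E1 i) x hx
  have hSj := sum_bdeg_sub hl R hR (insert x (E1 j)) x (Finset.mem_insert_self x (E1 j))
  rw [Finset.erase_insert hxB] at hSj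
  have hgi : g i = -n + (2 * bdeg R x (E1 i) - 1) := by
    simp only [hg, hE2i, hT, hcardAr]
    linarith [hSi]
  have hgj : g j = n - (2 * bdeg R x (insert x (E1 j)) - 1) := by
    simp only [hg, hE2j, hT, hcardBr]
    linarith [hSj]
  rw [hgi, hgj]
  ring
end

section
/- Let 𝓔¹ = (E¹_1, …, E¹_k) be a partition of U, let x ∈ E¹_i, let j ≠ i, and let 𝓔² be the partition obtained from 𝓔¹ by moving x from the i-th part to the j-th part: E²_i = E¹_i \ {x}, E²_j = E¹_j ∪ {x}, and E²_p = E¹_p for all p ∉ {i, j}. If the belonging degree of x to its current hyperedge is at least its belonging degree to the alternative hyperedge (both edges taken with x included), i.e. b(x, E¹_i) ≥ b(x, E¹_j ∪ {x}), then L(𝓔¹) ≤ L(𝓔²): moving a sample away from the hyperedge of highest belonging degree cannot decrease the loss. -/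
open Finset

variable {U : Type*} [Fintype U] [DecidableEq U]

/-- Per-clustering pair-counting identity. -/
lemma pert {l : ℕ} (R : Fin l → U → U → Prop) [∀ t, DecidableRel (R t)]
    (hR : ∀ t, Equivalence (R t)) (t : Fin l) (A : Finset U) (x : U)
    (hx : x ∈ A) :
    (∑ y ∈ A, ((Finset.univ.filter (fun z => R t z y) ∩ A).card : ℝ))
      = (∑ y ∈ A.erase x,
          ((Finset.univ.filter (fun z => R t z y) ∩ A.erase x).card : ℝ))
        + 2 * ((Finset.univ.filter (fun z => R t z x) ∩ A).card : ℝ) - 1 := by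
  have hcard : ∀ (B : Finset U) (y : U),
      ((Finset.univ.filter (fun z => R t z y) ∩ B).card : ℝ)
        = ∑ z ∈ B, (if R t z y then (1 : ℝ) else 0) := by
    intro B y
    have : Finset.univ.filter (fun z => R t z y) ∩ B
        = B.filter (fun z => R t z y) := by
      ext z; simp [and_comm]
    rw [this, Finset.card_filter]
    push_cast
    exact Finset.sum_congr rfl (fun z _ => by split <;> simp
      )
  simp only [hcard]
  set f : U → U → ℝ := fun z y => if R t z y then (1 : ℝ) else 0 with hf
  have hsymm : ∀ z y, f z y = f y z := by
    intro z y
    simp only [hf]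
    by_cases h : R t z y
    · rw [if_pos h, if_pos ((hR t).symm h)]
    · rw [if_neg h, if_neg (fun h' => h ((hR t).symm h'))]
  have hsplit : ∀ (g : U → ℝ), ∑ y ∈ A, g y = g x + ∑ y ∈ A.erase x, g y :=
    fun g => (Finset.add_sum_erase A g hx).symm
  rw [hsplit]
  have hinner : ∀ y, ∑ z ∈ A, f z y = f x y + ∑ z ∈ A.erase x, f z y :=
    fun y => hsplit (fun z => f z y)
  have h1 : ∑ y ∈ A.erase x, ∑ z ∈ A, f z y
      = (∑ y ∈ A.erase x, f x y) + ∑ y ∈ A.erase x, ∑ z ∈ A.erase x, f z y := by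
    rw [← Finset.sum_add_distrib]
    exact Finset.sum_congr rfl (fun y _ => hinner y)
  rw [h1]
  have h2 : ∑ y ∈ A.erase x, f x y = (∑ z ∈ A, f z x) - 1 := by
    have heq : ∑ y ∈ A.erase x, f x y = ∑ y ∈ A.erase x, f y x :=
      Finset.sum_congr rfl (fun y _ => hsymm x y)
    have hxx : f x x = 1 := by simp [hf, (hR t).refl x]
    have hs := hsplit (fun y => f y x)
    rw [heq]
    linarith [hs, hxx]
  rw [h2]
  ring

/-- Removing a point from a set changes the self-belonging sum by `2 b(x,A) - 1`. -/
lemma Ssum {l : ℕ} (hl : 1 ≤ l) (R : Fin l → U → U → Prop)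
    [∀ t, DecidableRel (R t)] (hR : ∀ t, Equivalence (R t))
    (A : Finset U) (x : U) (hx : x ∈ A) :
    ∑ y ∈ A, bdeg R y A
      = (∑ y ∈ A.erase x, bdeg R y (A.erase x)) + 2 * bdeg R x A - 1 := by
  have hl0 : (l : ℝ) ≠ 0 := Nat.cast_ne_zero.mpr (by omega)
  have swap : ∀ (B C : Finset U), ∑ y ∈ B, bdeg R y C
      = (1 / (l : ℝ)) * ∑ t : Fin l, ∑ y ∈ B,
          ((Finset.univ.filter (fun z => R t z y) ∩ C).card : ℝ) := by
    intro B C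
    simp only [bdeg, ← Finset.mul_sum]
    rw [Finset.sum_comm]
  have hsum : ∑ t : Fin l, ∑ y ∈ A,
        ((Finset.univ.filter (fun z => R t z y) ∩ A).card : ℝ)
      = ∑ t : Fin l, ((∑ y ∈ A.erase x,
          ((Finset.univ.filter (fun z => R t z y) ∩ A.erase x).card : ℝ))
        + 2 * ((Finset.univ.filter (fun z => R t z x) ∩ A).card : ℝ) - 1) :=
    Finset.sum_congr rfl (fun t _ => pert R hR t A x hx)
  rw [swap A A, swap (A.erase x) (A.erase x), hsum, bdeg]
  simp only [Finset.sum_sub_distrib, Finset.sum_add_distrib, Finset.sum_const,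
    ← Finset.mul_sum, Finset.card_univ, Fintype.card_fin, nsmul_eq_mul, mul_one]
  field_simp

/-- If `b(x, E¹_i) ≥ b(x, E¹_j ∪ {x})`, then moving `x` from the `i`-th part
to the `j`-th part cannot decrease the loss: `L(𝓔¹) ≤ L(𝓔²)`. -/
theorem loss_le_of_move_from_best {l k : ℕ} (hl : 1 ≤ l)
    (R : Fin l → U → U → Prop) [∀ t, DecidableRel (R t)]
    (hR : ∀ t, Equivalence (R t))
    (E1 : Fin k → Finset U)
    (hdisj : ∀ p q, p ≠ q → Disjoint (E1 p) (E1 q))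
    (hcover : (Finset.univ : Finset (Fin k)).biUnion E1 = Finset.univ)
    (x : U) (i j : Fin k) (hx : x ∈ E1 i) (hij : j ≠ i)
    (E2 : Fin k → Finset U)
    (hE2i : E2 i = (E1 i).erase x)
    (hE2j : E2 j = insert x (E1 j))
    (hE2 : ∀ p, p ≠ i → p ≠ j → E2 p = E1 p)
    (hbest : bdeg R x (insert x (E1 j)) ≤ bdeg R x (E1 i)) :
    lossL R E1 ≤ lossL R E2 := by
  have hxj : x ∉ E1 j := fun h => (Finset.disjoint_left.mp (hdisj i j hij.symm) hx) h
  set n : ℝ := (Fintype.card U : ℝ) with hn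
  -- inner term of loss for a part with set A
  set F : Finset U → ℝ := fun A => ∑ y ∈ A, (n - bdeg R y A) with hF
  have hFval : ∀ A : Finset U, F A = (A.card : ℝ) * n - ∑ y ∈ A, bdeg R y A := by
    intro A
    simp only [hF, Finset.sum_sub_distrib, Finset.sum_const, nsmul_eq_mul]
  -- difference at i
  have hdi : F (E2 i) - F (E1 i) = -(n + 1) + 2 * bdeg R x (E1 i) := by
    rw [hE2i, hFval, hFval, Ssum hl R hR (E1 i) x hx,
      Finset.card_erase_of_mem hx]
    have h1 : (1 : ℕ) ≤ (E1 i).card := Finset.card_pos.mpr ⟨x, hx⟩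
    have : ((E1 i).card - 1 : ℕ) = ((E1 i).card : ℝ) - 1 := by
      push_cast [h1]; ring
    rw [this]
    ring
  -- difference at j
  have hdj : F (E2 j) - F (E1 j) = (n + 1) - 2 * bdeg R x (insert x (E1 j)) := by
    have hxmem : x ∈ insert x (E1 j) := Finset.mem_insert_self x (E1 j)
    have herase : (insert x (E1 j)).erase x = E1 j := Finset.erase_insert hxj
    have hS := Ssum hl R hR (insert x (E1 j)) x hxmem
    rw [herase] at hS
    rw [hE2j, hFval, hFval, hS, Finset.card_insert_of_notMem hxj]
    push_cast
    ring
  -- sum over all parts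
  have hzero : ∀ p : Fin k, p ≠ i → p ≠ j → F (E2 p) - F (E1 p) = 0 := by
    intro p hpi hpj
    rw [hE2 p hpi hpj]
    ring
  have hdiff : lossL R E2 - lossL R E1 = ∑ p : Fin k, (F (E2 p) - F (E1 p)) := by
    simp only [lossL, ← Finset.sum_sub_distrib, hF, hn]
  have hsum : ∑ p : Fin k, (F (E2 p) - F (E1 p))
      = (F (E2 i) - F (E1 i)) + (F (E2 j) - F (E1 j)) := by
    rw [← Finset.add_sum_erase _ _ (Finset.mem_univ i),
      ← Finset.add_sum_erase _ (fun p => F (E2 p) - F (E1 p))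
        (Finset.mem_erase.mpr ⟨hij, Finset.mem_univ j⟩)]
    have : ∑ p ∈ (Finset.univ.erase i).erase j, (F (E2 p) - F (E1 p)) = 0 := by
      apply Finset.sum_eq_zero
      intro p hp
      have hpj := (Finset.mem_erase.mp hp).1
      have hpi := (Finset.mem_erase.mp (Finset.mem_erase.mp hp).2).1
      exact hzero p hpi hpj
    rw [this]
    ring
  have : lossL R E2 - lossL R E1
      = 2 * (bdeg R x (E1 i) - bdeg R x (insert x (E1 j))) := by
    rw [hdiff, hsum, hdi, hdj]; ring
  linarith
end
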